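/- For every norm ⦀·⦀ on ℝ^d and every function φ : {0,…,d} → ℝ̄: (i) the Capra biconjugate of φ∘ℓ0 satisfies (φ∘ℓ0)^{¢¢'}(x) = ((φ∘ℓ0)^¢)^★( x/⦀x⦀ ) for all x ≠ 0, where ((φ∘ℓ0)^¢)^★ denotes the Fenchel conjugate of the Capra conjugate; (ii) the closed convex function ((φ∘ℓ0)^¢)^★ equals the Fenchel biconjugate of the function x ↦ inf{ φ(l) : l ∈ {0,…,d}, x ∈ B_l } and also equals the Fenchel biconjugate of the function x ↦ inf{ φ(l) : l ∈ {0,…,d}, x ∈ S_l }, with the conventions B_0 = S_0 = {0} and inf ∅ = +∞. -/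

import Mathlib

open scoped BigOperators

noncomputable section

/-- The Euclidean pairing `⟨x,y⟩ = ∑ i, x i * y i` on `Fin d → ℝ`. -/
def dotp {d : ℕ} (x y : Fin d → ℝ) : ℝ := ∑ i, x i * y i

/-- The coordinate subspace `R_K` of vectors vanishing outside `K`. -/
def RK {d : ℕ} (K : Finset (Fin d)) : Set (Fin d → ℝ) := {x | ∀ j ∉ K, x j = 0}

/-- Orthogonal projection onto `R_K`. -/
def projK {d : ℕ} (K : Finset (Fin d)) (x : Fin d → ℝ) : Fin d → ℝ :=
  fun i => if i ∈ K then x i else 0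

/-- The ℓ0 pseudonorm: number of nonzero components. -/
def ell0 {d : ℕ} (x : Fin d → ℝ) : ℕ := (Function.support x).ncard

/-- `N` is a norm on `ℝ^d`. -/
structure IsNorm {d : ℕ} (N : (Fin d → ℝ) → ℝ) : Prop where
  eq_zero_iff : ∀ x, N x = 0 ↔ x = 0
  smul : ∀ (c : ℝ) (x : Fin d → ℝ), N (c • x) = |c| * N x
  triangle : ∀ x y, N (x + y) ≤ N x + N y

/-- `⦀y⦀_{K,★}`: the dual norm (w.r.t. the Euclidean pairing), on the subspace `R_K`,
of the restriction of `N` to `R_K`. -/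
def restStar {d : ℕ} (N : (Fin d → ℝ) → ℝ) (K : Finset (Fin d)) (y : Fin d → ℝ) : ℝ :=
  sSup {r | ∃ x ∈ RK K, N x ≤ 1 ∧ r = dotp x y}

/-- The dual coordinate-k norm `⦀y⦀_{k,★} = sup_{|K| ≤ k} ⦀y_K⦀_{K,★}`. -/
def dualCoord {d : ℕ} (N : (Fin d → ℝ) → ℝ) (k : ℕ) (y : Fin d → ℝ) : ℝ :=
  sSup {r | ∃ K : Finset (Fin d), K.card ≤ k ∧ r = restStar N K (projK K y)}

/-- The coordinate-k norm: the dual norm of the dual coordinate-k norm. -/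
def coordNorm {d : ℕ} (N : (Fin d → ℝ) → ℝ) (k : ℕ) (x : Fin d → ℝ) : ℝ :=
  sSup {r | ∃ y : Fin d → ℝ, dualCoord N k y ≤ 1 ∧ r = dotp x y}

/-- The Capra coupling `¢(x,y) = ⟨x,y⟩/⦀x⦀` (with `¢(0,y) = 0`). -/
def capra {d : ℕ} (N : (Fin d → ℝ) → ℝ) (x y : Fin d → ℝ) : ℝ :=
  if x = 0 then 0 else dotp x y / N x

/-- Capra conjugate `f^¢(y) = sup_x ( ¢(x,y) ∔ (−f(x)) )`.
(EReal addition is the Moreau lower addition: `⊤ + ⊥ = ⊥`.) -/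
def capraConj {d : ℕ} (N : (Fin d → ℝ) → ℝ) (f : (Fin d → ℝ) → EReal)
    (y : Fin d → ℝ) : EReal :=
  ⨆ x : Fin d → ℝ, ((capra N x y : ℝ) : EReal) + (- f x)

/-- Capra biconjugate `f^{¢¢'}(x) = sup_y ( ¢(x,y) ∔ (−f^¢(y)) )`. -/
def capraBiconj {d : ℕ} (N : (Fin d → ℝ) → ℝ) (f : (Fin d → ℝ) → EReal)
    (x : Fin d → ℝ) : EReal :=
  ⨆ y : Fin d → ℝ, ((capra N x y : ℝ) : EReal) + (- capraConj N f y)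

/-- Fenchel conjugate `g^★(y) = sup_x ( ⟨x,y⟩ ∔ (−g(x)) )`. -/
def fenchelConj {d : ℕ} (g : (Fin d → ℝ) → EReal) (y : Fin d → ℝ) : EReal :=
  ⨆ x : Fin d → ℝ, ((dotp x y : ℝ) : EReal) + (- g x)

/-- The unit ball of the coordinate-k norm, with the convention `B_0 = {0}`. -/
def coordBall {d : ℕ} (N : (Fin d → ℝ) → ℝ) (k : ℕ) : Set (Fin d → ℝ) :=
  if k = 0 then {0} else {x | coordNorm N k x ≤ 1}

/-- The unit sphere of the coordinate-k norm, with the convention `S_0 = {0}`. -/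
def coordSphere {d : ℕ} (N : (Fin d → ℝ) → ℝ) (k : ℕ) : Set (Fin d → ℝ) :=
  if k = 0 then {0} else {x | coordNorm N k x = 1}

/-- Fenchel biconjugate `g^{★★}(x) = sup_y ( ⟨x,y⟩ ∔ (−g^★(y)) )`. -/
def fenchelBiconj {d : ℕ} (g : (Fin d → ℝ) → EReal) (x : Fin d → ℝ) : EReal :=
  ⨆ y : Fin d → ℝ, ((dotp x y : ℝ) : EReal) + (- fenchelConj g y)

section Basic

variable {d : ℕ}

lemma dotp_comm (x y : Fin d → ℝ) : dotp x y = dotp y x := by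
  unfold dotp; exact Finset.sum_congr rfl fun i _ => mul_comm _ _

lemma dotp_zero_left (y : Fin d → ℝ) : dotp 0 y = 0 := by
  unfold dotp; simp

lemma dotp_zero_right (x : Fin d → ℝ) : dotp x 0 = 0 := by
  unfold dotp; simp

lemma dotp_smul_left (c : ℝ) (x y : Fin d → ℝ) : dotp (c • x) y = c * dotp x y := by
  unfold dotp; rw [Finset.mul_sum]; exact Finset.sum_congr rfl fun i _ => by
    simp [mul_assoc]

lemma dotp_smul_right (c : ℝ) (x y : Fin d → ℝ) : dotp x (c • y) = c * dotp x y := by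
  rw [dotp_comm, dotp_smul_left, dotp_comm]

lemma dotp_neg_left (x y : Fin d → ℝ) : dotp (-x) y = - dotp x y := by
  have : (-x) = (-1 : ℝ) • x := by funext i; simp
  rw [this, dotp_smul_left]; ring

lemma dotp_neg_right (x y : Fin d → ℝ) : dotp x (-y) = - dotp x y := by
  rw [dotp_comm, dotp_neg_left, dotp_comm]

lemma dotp_add_left (x x' y : Fin d → ℝ) : dotp (x + x') y = dotp x y + dotp x' y := by
  unfold dotp; rw [← Finset.sum_add_distrib]; exact Finset.sum_congr rfl fun i _ => by
    simp [add_mul]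

lemma dotp_add_right (x y y' : Fin d → ℝ) : dotp x (y + y') = dotp x y + dotp x y' := by
  rw [dotp_comm, dotp_add_left, dotp_comm y x, dotp_comm y' x]

lemma abs_dotp_le (x y : Fin d → ℝ) : |dotp x y| ≤ (d : ℝ) * (‖x‖ * ‖y‖) := by
  unfold dotp
  calc |∑ i, x i * y i| ≤ ∑ i, |x i * y i| := Finset.abs_sum_le_sum_abs _ _
    _ ≤ ∑ _i : Fin d, ‖x‖ * ‖y‖ := by
        refine Finset.sum_le_sum fun i _ => ?_
        rw [abs_mul]
        have h1 : |x i| ≤ ‖x‖ := norm_le_pi_norm x i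
        have h2 : |y i| ≤ ‖y‖ := norm_le_pi_norm y i
        exact mul_le_mul h1 h2 (abs_nonneg _) (norm_nonneg _)
    _ = (d : ℝ) * (‖x‖ * ‖y‖) := by simp [Finset.sum_const, mul_comm]

variable {N : (Fin d → ℝ) → ℝ} (hN : IsNorm N)

lemma IsNorm.zero (hN : IsNorm N) : N 0 = 0 := (hN.eq_zero_iff 0).2 rfl

lemma IsNorm.neg (hN : IsNorm N) (x : Fin d → ℝ) : N (-x) = N x := by
  have : (-x) = (-1 : ℝ) • x := by funext i; simp
  rw [this, hN.smul]; simp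

lemma IsNorm.nonneg (hN : IsNorm N) (x : Fin d → ℝ) : 0 ≤ N x := by
  have h := hN.triangle x (-x)
  rw [hN.neg, add_neg_cancel, hN.zero] at h
  linarith

lemma IsNorm.pos (hN : IsNorm N) {x : Fin d → ℝ} (hx : x ≠ 0) : 0 < N x :=
  lt_of_le_of_ne (hN.nonneg x) fun h => hx ((hN.eq_zero_iff x).1 h.symm)

lemma IsNorm.sum_le (hN : IsNorm N) {ι : Type*} (s : Finset ι) (f : ι → Fin d → ℝ) :
    N (∑ i ∈ s, f i) ≤ ∑ i ∈ s, N (f i) := by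
  classical
  induction s using Finset.induction with
  | empty => simp [hN.zero]
  | insert a s hni ih =>
      rw [Finset.sum_insert hni, Finset.sum_insert hni]
      exact (hN.triangle _ _).trans (by linarith)

lemma IsNorm.upper (hN : IsNorm N) :
    ∃ B : ℝ, 0 < B ∧ ∀ x, N x ≤ B * ‖x‖ := by
  refine ⟨(∑ i, N ((Pi.single i 1 : Fin d → ℝ))) + 1,
    add_pos_of_nonneg_of_pos (Finset.sum_nonneg fun i _ => hN.nonneg _) one_pos, fun x => ?_⟩
  have hx : x = ∑ i, x i • (Pi.single i 1 : Fin d → ℝ) := by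
    funext j; simp [Pi.single_apply]
  calc N x = N (∑ i, x i • (Pi.single i 1 : Fin d → ℝ)) := by rw [← hx]
    _ ≤ ∑ i, N (x i • (Pi.single i 1 : Fin d → ℝ)) := hN.sum_le _ _
    _ = ∑ i, |x i| * N ((Pi.single i 1 : Fin d → ℝ)) := by simp [hN.smul]
    _ ≤ ∑ i, ‖x‖ * N ((Pi.single i 1 : Fin d → ℝ)) := by
        refine Finset.sum_le_sum fun i _ => ?_
        exact mul_le_mul_of_nonneg_right (norm_le_pi_norm x i) (hN.nonneg _)
    _ = (∑ i, N ((Pi.single i 1 : Fin d → ℝ))) * ‖x‖ := by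
        rw [Finset.sum_mul]; exact Finset.sum_congr rfl fun i _ => mul_comm _ _
    _ ≤ ((∑ i, N ((Pi.single i 1 : Fin d → ℝ))) + 1) * ‖x‖ := by
        have : (0:ℝ) ≤ ‖x‖ := norm_nonneg _
        nlinarith

end Basic
section Equiv

variable {d : ℕ} {N : (Fin d → ℝ) → ℝ}

lemma IsNorm.continuous (hN : IsNorm N) : Continuous N := by
  obtain ⟨B, hB, hub⟩ := hN.upper
  have : LipschitzWith (Real.toNNReal B) N := by
    apply LipschitzWith.of_dist_le_mul
    intro x y
    have h1 : N x ≤ N y + B * ‖x - y‖ := by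
      have h := hN.triangle (x - y) y
      rw [sub_add_cancel] at h
      linarith [hub (x - y)]
    have h2 : N y ≤ N x + B * ‖x - y‖ := by
      have h := hN.triangle (y - x) x
      rw [sub_add_cancel] at h
      have hn : ‖y - x‖ = ‖x - y‖ := norm_sub_rev y x
      have hub2 := hub (y - x)
      rw [hn] at hub2
      linarith
    rw [Real.dist_eq, dist_eq_norm]
    rw [Real.coe_toNNReal _ hB.le]
    exact abs_le.2 ⟨by linarith, by linarith⟩
  exact this.continuous

lemma IsNorm.lower (hN : IsNorm N) : ∃ A : ℝ, 0 < A ∧ ∀ x : Fin d → ℝ, ‖x‖ ≤ A * N x := by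
  rcases Nat.eq_zero_or_pos d with hd | hd
  · refine ⟨1, one_pos, fun x => ?_⟩
    have hx : x = 0 := funext fun i => absurd i.2 (by omega)
    simp [hx, hN.zero]
  · have hsne : (Metric.sphere (0 : Fin d → ℝ) 1).Nonempty := by
      refine ⟨(Pi.single ⟨0, hd⟩ 1 : Fin d → ℝ), ?_⟩
      rw [Metric.mem_sphere, dist_zero_right]
      have : ‖(Pi.single (⟨0, hd⟩ : Fin d) 1 : Fin d → ℝ)‖ = ‖(1:ℝ)‖ := Pi.norm_single _
      simpa using this
    have hcs : IsCompact (Metric.sphere (0 : Fin d → ℝ) 1) := isCompact_sphere _ _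
    obtain ⟨z, hz, hmin⟩ := hcs.exists_isMinOn hsne (hN.continuous.continuousOn)
    have hz1 : ‖z‖ = 1 := by simpa [dist_zero_right] using hz
    have hzne : z ≠ 0 := fun h => by simp [h] at hz1
    have hm : 0 < N z := hN.pos hzne
    refine ⟨(N z)⁻¹, inv_pos.2 hm, fun x => ?_⟩
    rcases eq_or_ne x 0 with rfl | hx
    · simp [hN.zero]
    · have hxn : (0:ℝ) < ‖x‖ := norm_pos_iff.2 hx
      have hmem : (‖x‖⁻¹ • x) ∈ Metric.sphere (0 : Fin d → ℝ) 1 := by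
        simp [dist_zero_right, norm_smul, abs_of_pos (inv_pos.2 hxn), inv_mul_cancel₀ hxn.ne']
      have := hmin hmem
      have hval : N (‖x‖⁻¹ • x) = ‖x‖⁻¹ * N x := by
        rw [hN.smul, abs_of_pos (inv_pos.2 hxn)]
      rw [Set.mem_setOf_eq] at this
      -- this : N z ≤ N (‖x‖⁻¹ • x)
      have h2 : N z ≤ ‖x‖⁻¹ * N x := by rw [← hval]; exact this
      have h3 : ‖x‖ * N z ≤ N x := by
        have := mul_le_mul_of_nonneg_left h2 hxn.le
        rwa [← mul_assoc, mul_inv_cancel₀ hxn.ne', one_mul] at this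
      have h4 : ‖x‖ ≤ N x / N z := (le_div_iff₀ hm).2 h3
      rwa [div_eq_inv_mul] at h4

lemma IsNorm.hahnBanach (hN : IsNorm N) {y : Fin d → ℝ} (hy : y ≠ 0) :
    ∃ x0 : Fin d → ℝ, (∀ z, dotp z x0 ≤ N z) ∧ dotp y x0 = N y := by
  classical
  set p : Submodule ℝ (Fin d → ℝ) := Submodule.span ℝ {y}
  have hymem : y ∈ p := Submodule.mem_span_singleton_self y
  let f : p →ₗ[ℝ] ℝ := (N y) • ((LinearEquiv.coord ℝ (Fin d → ℝ) y hy : p →ₗ[ℝ] ℝ))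
  have hcoord : ∀ (c : ℝ), f ⟨c • y, Submodule.smul_mem p c hymem⟩ = c * N y := by
    intro c
    have := LinearEquiv.coord_self ℝ (Fin d → ℝ) y hy
    have hc : (LinearEquiv.coord ℝ (Fin d → ℝ) y hy) ⟨c • y, Submodule.smul_mem p c hymem⟩
        = c := by
      have h1 : (⟨c • y, Submodule.smul_mem p c hymem⟩ : p)
          = c • (⟨y, hymem⟩ : p) := by ext; simp
      rw [h1, map_smul]
      have h2 : (⟨y, hymem⟩ : p) = (⟨y, Submodule.mem_span_singleton_self y⟩ : p) := rfl
      rw [h2, this]; simp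
    simp [f, hc, mul_comm]
  have hf : ∀ x : p, f x ≤ N x := by
    rintro ⟨x, hx⟩
    rcases Submodule.mem_span_singleton.1 hx with ⟨c, rfl⟩
    have := hcoord c
    rw [this, hN.smul]
    have : c * N y ≤ |c| * N y :=
      mul_le_mul_of_nonneg_right (le_abs_self c) (hN.nonneg y)
    exact this
  obtain ⟨g, hg1, hg2⟩ := exists_extension_of_le_sublinear ⟨p, f⟩ N
    (fun c hc x => by rw [hN.smul, abs_of_pos hc]) hN.triangle hf
  refine ⟨fun i => g (Pi.single i 1), fun z => ?_, ?_⟩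
  · have hz : dotp z (fun i => g (Pi.single i 1)) = g z := by
      unfold dotp
      have hzz : z = ∑ i, z i • (Pi.single i 1 : Fin d → ℝ) := by
        funext j; simp [Pi.single_apply]
      calc ∑ i, z i * g (Pi.single i 1) = g (∑ i, z i • (Pi.single i 1 : Fin d → ℝ)) := by
            rw [map_sum]; exact Finset.sum_congr rfl fun i _ => by rw [map_smul]; rfl
        _ = g z := by rw [← hzz]
    rw [hz]; exact hg2 z
  · have hy0 : dotp y (fun i => g (Pi.single i 1)) = g y := by
      unfold dotp
      have hzz : y = ∑ i, y i • (Pi.single i 1 : Fin d → ℝ) := by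
        funext j; simp [Pi.single_apply]
      calc ∑ i, y i * g (Pi.single i 1) = g (∑ i, y i • (Pi.single i 1 : Fin d → ℝ)) := by
            rw [map_sum]; exact Finset.sum_congr rfl fun i _ => by rw [map_smul]; rfl
        _ = g y := by rw [← hzz]
    rw [hy0]
    have := hg1 ⟨y, hymem⟩
    have hfy : f ⟨y, hymem⟩ = N y := by
      have h1 := hcoord 1
      have he : (⟨(1:ℝ) • y, Submodule.smul_mem p 1 hymem⟩ : p) = ⟨y, hymem⟩ := by
        ext; simp
      rw [he] at h1
      rw [h1, one_mul]
    have h := hg1 ⟨y, hymem⟩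
    exact h.trans hfy

end Equiv
section Ell0

variable {d : ℕ}

lemma ell0_zero : ell0 (0 : Fin d → ℝ) = 0 := by
  unfold ell0; simp

lemma ell0_eq_zero_iff (x : Fin d → ℝ) : ell0 x = 0 ↔ x = 0 := by
  unfold ell0
  rw [Set.ncard_eq_zero (Set.toFinite _), Function.support_eq_empty_iff]

lemma ell0_le (x : Fin d → ℝ) : ell0 x ≤ d := by
  unfold ell0
  have h := Set.ncard_le_ncard (Set.subset_univ (Function.support x)) (Set.finite_univ)
  rw [Set.ncard_univ, Nat.card_eq_fintype_card, Fintype.card_fin] at h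
  exact h

lemma ell0_smul {c : ℝ} (hc : c ≠ 0) (x : Fin d → ℝ) : ell0 (c • x) = ell0 x := by
  unfold ell0
  congr 1
  ext i
  simp [Function.mem_support, hc]

lemma ell0_neg (x : Fin d → ℝ) : ell0 (-x) = ell0 x := by
  have : -x = (-1 : ℝ) • x := by funext i; simp
  rw [this, ell0_smul (by norm_num)]

lemma mem_RK_toFinset (x : Fin d → ℝ) : x ∈ RK ((Set.toFinite (Function.support x)).toFinset) := by
  intro j hj
  by_contra h
  exact hj ((Set.Finite.mem_toFinset _).2 h)

lemma ell0_eq_card (x : Fin d → ℝ) :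
    ((Set.toFinite (Function.support x)).toFinset).card = ell0 x := by
  unfold ell0
  rw [Set.ncard_eq_toFinset_card _ (Set.toFinite _)]

lemma ell0_le_of_mem_RK {x : Fin d → ℝ} {K : Finset (Fin d)} (hx : x ∈ RK K) :
    ell0 x ≤ K.card := by
  unfold ell0
  have hsub : Function.support x ⊆ (K : Set (Fin d)) := by
    intro i hi
    by_contra h
    exact hi (hx i (by simpa using h))
  calc (Function.support x).ncard ≤ (K : Set (Fin d)).ncard :=
        Set.ncard_le_ncard hsub (Set.toFinite _)
    _ = K.card := by rw [Set.ncard_coe_finset]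

end Ell0

section DualCoord

variable {d : ℕ} {N : (Fin d → ℝ) → ℝ}

/-- The sparse unit-ball pairing set. -/
def Dset (N : (Fin d → ℝ) → ℝ) (l : ℕ) (y : Fin d → ℝ) : Set ℝ :=
  {r | ∃ x, ell0 x ≤ l ∧ N x ≤ 1 ∧ r = dotp x y}

lemma Dset_nonempty (l : ℕ) (y : Fin d → ℝ) (hN : IsNorm N) : (Dset N l y).Nonempty :=
  ⟨0, 0, by simp [ell0_zero], by simp [hN.zero], (dotp_zero_left y).symm⟩

lemma Dset_bddAbove (hN : IsNorm N) (l : ℕ) (y : Fin d → ℝ) :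
    ∃ A, 0 < A ∧ Dset N l y ⊆ Set.Iic A := by
  obtain ⟨A, hA, hlow⟩ := hN.lower
  refine ⟨(d : ℝ) * (A * ‖y‖) + 1, by positivity, ?_⟩
  rintro r ⟨x, _, hx1, rfl⟩
  have h1 : |dotp x y| ≤ (d : ℝ) * (‖x‖ * ‖y‖) := abs_dotp_le x y
  have h2 : ‖x‖ ≤ A := by
    have := hlow x
    nlinarith [hN.nonneg x]
  have h3 : (d:ℝ) * (‖x‖ * ‖y‖) ≤ (d:ℝ) * (A * ‖y‖) := by
    have : ‖x‖ * ‖y‖ ≤ A * ‖y‖ := mul_le_mul_of_nonneg_right h2 (norm_nonneg _)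
    exact mul_le_mul_of_nonneg_left this (Nat.cast_nonneg d)
  have := (abs_le.1 h1).2
  simp only [Set.mem_Iic]
  linarith

lemma Dset_symm {l : ℕ} {y : Fin d → ℝ} {r : ℝ} (hN : IsNorm N) (hr : r ∈ Dset N l y) :
    -r ∈ Dset N l y := by
  obtain ⟨x, h1, h2, rfl⟩ := hr
  exact ⟨-x, by rwa [ell0_neg], by rwa [hN.neg], (dotp_neg_left x y).symm⟩

lemma dualCoord_eq_sSup_Dset (hN : IsNorm N) (l : ℕ) (y : Fin d → ℝ) :
    dualCoord N l y = sSup (Dset N l y) := by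
  obtain ⟨A, hA, hsub⟩ := Dset_bddAbove hN l y
  have hbdd : BddAbove (Dset N l y) := ⟨A, fun r hr => hsub hr⟩
  have hne : (Dset N l y).Nonempty := Dset_nonempty l y hN
  -- restStar equality
  have hrs : ∀ K : Finset (Fin d),
      restStar N K (projK K y) = sSup {r | ∃ x ∈ RK K, N x ≤ 1 ∧ r = dotp x y} := by
    intro K
    unfold restStar
    congr 1
    ext r
    constructor
    · rintro ⟨x, hx, hx1, rfl⟩
      refine ⟨x, hx, hx1, ?_⟩
      unfold dotp projK
      refine Finset.sum_congr rfl fun i _ => ?_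
      by_cases hi : i ∈ K
      · simp [hi]
      · simp [hi, hx i hi]
    · rintro ⟨x, hx, hx1, rfl⟩
      refine ⟨x, hx, hx1, ?_⟩
      unfold dotp projK
      refine Finset.sum_congr rfl fun i _ => ?_
      by_cases hi : i ∈ K
      · simp [hi]
      · simp [hi, hx i hi]
  have hKsub : ∀ K : Finset (Fin d), K.card ≤ l →
      {r | ∃ x ∈ RK K, N x ≤ 1 ∧ r = dotp x y} ⊆ Dset N l y := by
    rintro K hK r ⟨x, hx, hx1, rfl⟩
    exact ⟨x, (ell0_le_of_mem_RK hx).trans hK, hx1, rfl⟩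
  have h0 : (0:ℝ) ∈ Dset N l y :=
    ⟨0, by simp [ell0_zero], by simp [hN.zero], (dotp_zero_left y).symm⟩
  have hDnonneg : 0 ≤ sSup (Dset N l y) := le_csSup hbdd h0
  have hKbdd : ∀ K : Finset (Fin d), K.card ≤ l →
      restStar N K (projK K y) ≤ sSup (Dset N l y) := by
    intro K hK
    rw [hrs K]
    apply Real.sSup_le
    · rintro s hs
      exact le_csSup hbdd (hKsub K hK hs)
    · exact hDnonneg
  have hOuterBdd : BddAbove {r | ∃ K : Finset (Fin d), K.card ≤ l ∧
      r = restStar N K (projK K y)} := by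
    refine ⟨sSup (Dset N l y), ?_⟩
    rintro r ⟨K, hK, rfl⟩
    exact hKbdd K hK
  have hempty : restStar N (∅ : Finset (Fin d)) (projK ∅ y) = 0 := by
    rw [hrs ∅]
    have : {r | ∃ x ∈ RK (∅ : Finset (Fin d)), N x ≤ 1 ∧ r = dotp x y} = {0} := by
      ext r
      constructor
      · rintro ⟨x, hx, _, rfl⟩
        have : x = 0 := funext fun j => hx j (by simp)
        simp [this, dotp_zero_left]
      · rintro rfl
        exact ⟨0, fun j _ => rfl, by simp [hN.zero], (dotp_zero_left y).symm⟩
    rw [this, csSup_singleton]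
  have hOuterNonneg : 0 ≤ sSup {r | ∃ K : Finset (Fin d), K.card ≤ l ∧
      r = restStar N K (projK K y)} := by
    rw [← hempty]
    exact le_csSup hOuterBdd ⟨∅, by simp, rfl⟩
  unfold dualCoord
  apply le_antisymm
  · apply Real.sSup_le
    · rintro r ⟨K, hK, rfl⟩
      exact hKbdd K hK
    · exact hDnonneg
  · apply Real.sSup_le
    · rintro r ⟨x, hx, hx1, rfl⟩
      have hKcard : ((Set.toFinite (Function.support x)).toFinset).card ≤ l := by
        rw [ell0_eq_card]; exact hx
      have hsubbdd : BddAbove {s | ∃ z ∈ RK ((Set.toFinite (Function.support x)).toFinset),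
          N z ≤ 1 ∧ s = dotp z y} :=
        ⟨sSup (Dset N l y), fun s hs => le_csSup hbdd (hKsub _ hKcard hs)⟩
      have h1 : dotp x y ≤ restStar N ((Set.toFinite (Function.support x)).toFinset)
          (projK ((Set.toFinite (Function.support x)).toFinset) y) := by
        rw [hrs]
        exact le_csSup hsubbdd ⟨x, mem_RK_toFinset x, hx1, rfl⟩
      exact h1.trans (le_csSup hOuterBdd ⟨_, hKcard, rfl⟩)
    · exact hOuterNonneg

end DualCoord
section Helpers

lemma sSup_mul_symm {S : Set ℝ} (hne : S.Nonempty) (hbdd : BddAbove S)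
    (hsymm : ∀ r ∈ S, -r ∈ S) (c : ℝ) :
    sSup ((fun r => c * r) '' S) = |c| * sSup S := by
  have hSnonneg : 0 ≤ sSup S := by
    obtain ⟨r, hr⟩ := hne
    rcases le_or_gt 0 r with h | h
    · exact h.trans (le_csSup hbdd hr)
    · have := le_csSup hbdd (hsymm r hr)
      linarith
  have key : ∀ c : ℝ, 0 < c → sSup ((fun r => c * r) '' S) ≤ c * sSup S := by
    intro c hc
    apply Real.sSup_le
    · rintro r ⟨s, hs, rfl⟩
      exact mul_le_mul_of_nonneg_left (le_csSup hbdd hs) hc.le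
    · positivity
  have himg : ∀ c : ℝ, 0 < c → ((fun r => c * r) '' S).Nonempty ∧
      BddAbove ((fun r => c * r) '' S) := by
    intro c hc
    refine ⟨hne.image _, ?_⟩
    obtain ⟨b, hb⟩ := hbdd
    exact ⟨c * b, by rintro r ⟨s, hs, rfl⟩; exact mul_le_mul_of_nonneg_left (hb hs) hc.le⟩
  have keyeq : ∀ c : ℝ, 0 < c → sSup ((fun r => c * r) '' S) = c * sSup S := by
    intro c hc
    refine le_antisymm (key c hc) ?_
    have himgnn : 0 ≤ sSup ((fun r => c * r) '' S) := by
      obtain ⟨r, hr⟩ := hne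
      have hb := (himg c hc).2
      rcases le_or_gt 0 r with h | h
      · exact (by positivity : (0:ℝ) ≤ c * r).trans (le_csSup hb ⟨r, hr, rfl⟩)
      · have : c * (-r) ∈ (fun r => c * r) '' S := ⟨-r, hsymm r hr, rfl⟩
        have := le_csSup hb this
        nlinarith
    have hS : sSup S ≤ c⁻¹ * sSup ((fun r => c * r) '' S) := by
      apply Real.sSup_le
      · intro r hr
        have : c * r ≤ sSup ((fun r => c * r) '' S) :=
          le_csSup (himg c hc).2 ⟨r, hr, rfl⟩
        calc r = c⁻¹ * (c * r) := by rw [← mul_assoc, inv_mul_cancel₀ hc.ne', one_mul]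
          _ ≤ c⁻¹ * sSup ((fun r => c * r) '' S) :=
            mul_le_mul_of_nonneg_left this (inv_pos.2 hc).le
      · positivity
    calc c * sSup S ≤ c * (c⁻¹ * sSup ((fun r => c * r) '' S)) :=
          mul_le_mul_of_nonneg_left hS hc.le
      _ = sSup ((fun r => c * r) '' S) := by
          rw [← mul_assoc, mul_inv_cancel₀ hc.ne', one_mul]
  rcases lt_trichotomy c 0 with hc | hc | hc
  · have himgS : (fun r => c * r) '' S = (fun r => (-c) * r) '' S := by
      ext r
      constructor
      · rintro ⟨s, hs, rfl⟩
        exact ⟨-s, hsymm s hs, by ring⟩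
      · rintro ⟨s, hs, rfl⟩
        exact ⟨-s, hsymm s hs, by ring⟩
    rw [himgS, keyeq (-c) (by linarith), abs_of_neg hc]
  · subst hc
    have : (fun r => (0:ℝ) * r) '' S = {0} := by
      ext r
      constructor
      · rintro ⟨s, _, rfl⟩; simp
      · rintro rfl; obtain ⟨s, hs⟩ := hne; exact ⟨s, hs, by simp⟩
    rw [this, csSup_singleton]; simp
  · rw [keyeq c hc, abs_of_pos hc]

end Helpers

section DualNorm

variable {d : ℕ} {N : (Fin d → ℝ) → ℝ}

lemma Dset_bddAbove' (hN : IsNorm N) (l : ℕ) (y : Fin d → ℝ) : BddAbove (Dset N l y) := by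
  obtain ⟨A, _, hsub⟩ := Dset_bddAbove hN l y
  exact ⟨A, fun r hr => hsub hr⟩

lemma dualCoord_nonneg (hN : IsNorm N) (l : ℕ) (y : Fin d → ℝ) : 0 ≤ dualCoord N l y := by
  rw [dualCoord_eq_sSup_Dset hN]
  exact le_csSup (Dset_bddAbove' hN l y)
    ⟨0, by simp [ell0_zero], by simp [hN.zero], (dotp_zero_left y).symm⟩

lemma dualCoord_zero_right (hN : IsNorm N) (l : ℕ) : dualCoord N l 0 = 0 := by
  rw [dualCoord_eq_sSup_Dset hN]
  have : Dset N l (0 : Fin d → ℝ) = {0} := by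
    ext r
    constructor
    · rintro ⟨x, _, _, rfl⟩; simp [dotp_zero_right]
    · rintro rfl
      exact ⟨0, by simp [ell0_zero], by simp [hN.zero], (dotp_zero_right 0).symm⟩
  rw [this, csSup_singleton]

lemma dualCoord_level_zero (hN : IsNorm N) (y : Fin d → ℝ) : dualCoord N 0 y = 0 := by
  rw [dualCoord_eq_sSup_Dset hN]
  have : Dset N 0 y = {0} := by
    ext r
    constructor
    · rintro ⟨x, hx, _, rfl⟩
      have : x = 0 := (ell0_eq_zero_iff x).1 (Nat.le_zero.1 hx)
      simp [this, dotp_zero_left]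
    · rintro rfl
      exact ⟨0, by simp [ell0_zero], by simp [hN.zero], (dotp_zero_left y).symm⟩
  rw [this, csSup_singleton]

lemma Dset_smul (hN : IsNorm N) (l : ℕ) (c : ℝ) (y : Fin d → ℝ) :
    Dset N l (c • y) = (fun r => c * r) '' Dset N l y := by
  ext r
  constructor
  · rintro ⟨x, h1, h2, rfl⟩
    exact ⟨dotp x y, ⟨x, h1, h2, rfl⟩, (dotp_smul_right c x y).symm⟩
  · rintro ⟨s, ⟨x, h1, h2, rfl⟩, rfl⟩
    exact ⟨x, h1, h2, (dotp_smul_right c x y).symm⟩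

lemma dualCoord_smul (hN : IsNorm N) (l : ℕ) (c : ℝ) (y : Fin d → ℝ) :
    dualCoord N l (c • y) = |c| * dualCoord N l y := by
  rw [dualCoord_eq_sSup_Dset hN, dualCoord_eq_sSup_Dset hN, Dset_smul hN]
  exact sSup_mul_symm (Dset_nonempty l y hN) (Dset_bddAbove' hN l y)
    (fun r hr => Dset_symm hN hr) c

lemma dualCoord_neg (hN : IsNorm N) (l : ℕ) (y : Fin d → ℝ) :
    dualCoord N l (-y) = dualCoord N l y := by
  have : -y = (-1 : ℝ) • y := by funext i; simp
  rw [this, dualCoord_smul hN]; simp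

lemma dualCoord_triangle (hN : IsNorm N) (l : ℕ) (y z : Fin d → ℝ) :
    dualCoord N l (y + z) ≤ dualCoord N l y + dualCoord N l z := by
  rw [dualCoord_eq_sSup_Dset hN, dualCoord_eq_sSup_Dset hN, dualCoord_eq_sSup_Dset hN]
  apply Real.sSup_le
  · rintro r ⟨x, h1, h2, rfl⟩
    rw [dotp_add_right]
    exact add_le_add (le_csSup (Dset_bddAbove' hN l y) ⟨x, h1, h2, rfl⟩)
      (le_csSup (Dset_bddAbove' hN l z) ⟨x, h1, h2, rfl⟩)
  · have h1 := dualCoord_nonneg hN l y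
    have h2 := dualCoord_nonneg hN l z
    rw [dualCoord_eq_sSup_Dset hN] at h1
    rw [dualCoord_eq_sSup_Dset hN] at h2
    linarith

lemma dotp_single (i : Fin d) (y : Fin d → ℝ) :
    dotp (Pi.single i 1 : Fin d → ℝ) y = y i := by
  unfold dotp
  rw [Finset.sum_eq_single i]
  · simp
  · intro j _ hj
    simp [Pi.single_apply, hj]
  · simp

lemma dualCoord_pos (hN : IsNorm N) {l : ℕ} (hl : 1 ≤ l) {y : Fin d → ℝ} (hy : y ≠ 0) :
    0 < dualCoord N l y := by
  obtain ⟨i, hi⟩ : ∃ i, y i ≠ 0 := by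
    by_contra h
    push_neg at h
    exact hy (funext h)
  set e : Fin d → ℝ := Pi.single i 1 with he
  have hene : e ≠ 0 := by
    intro h
    have := congrFun h i
    simp [he] at this
  have hNe : 0 < N e := hN.pos hene
  set c : ℝ := y i / (|y i| * N e) with hc
  have hyi : 0 < |y i| := abs_pos.2 hi
  have hx : ell0 (c • e) ≤ l := by
    have h1 : ell0 (c • e) ≤ ell0 e := by
      rcases eq_or_ne c 0 with h | h
      · simp [h, ell0_zero]
      · rw [ell0_smul h]
    have h2 : ell0 e ≤ 1 := by
      unfold ell0
      have : Function.support e ⊆ {i} := by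
        intro j hj
        rw [Function.mem_support] at hj
        by_contra hne
        simp only [Set.mem_singleton_iff] at hne
        exact hj (by simp [he, Pi.single_apply, hne])
      calc (Function.support e).ncard ≤ ({i} : Set (Fin d)).ncard :=
            Set.ncard_le_ncard this (Set.toFinite _)
        _ = 1 := Set.ncard_singleton i
    omega
  have habsc : |c| * N e = 1 := by
    rw [hc, abs_div, abs_mul, abs_abs, abs_of_pos hNe]
    field_simp
  have hNx : N (c • e) ≤ 1 := by
    rw [hN.smul, habsc]
  have hdot : dotp (c • e) y = |y i| / N e := by
    rw [dotp_smul_left, he, dotp_single, hc]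
    rw [div_mul_eq_mul_div, div_eq_div_iff (by positivity) hNe.ne']
    rw [← mul_assoc, abs_mul_abs_self]
  have hpos : 0 < |y i| / N e := by positivity
  have : |y i| / N e ≤ dualCoord N l y := by
    rw [dualCoord_eq_sSup_Dset hN]
    exact le_csSup (Dset_bddAbove' hN l y) ⟨c • e, hx, hNx, hdot.symm⟩
  linarith

lemma isNorm_dualCoord (hN : IsNorm N) {l : ℕ} (hl : 1 ≤ l) : IsNorm (dualCoord N l) := by
  refine ⟨fun y => ⟨fun h => ?_, fun h => by rw [h, dualCoord_zero_right hN]⟩,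
    dualCoord_smul hN l, dualCoord_triangle hN l⟩
  by_contra hy
  exact absurd h (dualCoord_pos hN hl hy).ne'

end DualNorm
section CoordNorm

variable {d : ℕ} {N : (Fin d → ℝ) → ℝ}

/-- The defining set of `coordNorm`. -/
def Cset (N : (Fin d → ℝ) → ℝ) (l : ℕ) (x : Fin d → ℝ) : Set ℝ :=
  {r | ∃ y : Fin d → ℝ, dualCoord N l y ≤ 1 ∧ r = dotp x y}

lemma coordNorm_eq (l : ℕ) (x : Fin d → ℝ) : coordNorm N l x = sSup (Cset N l x) := rfl

lemma Cset_nonempty (hN : IsNorm N) (l : ℕ) (x : Fin d → ℝ) : (Cset N l x).Nonempty :=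
  ⟨0, 0, by rw [dualCoord_zero_right hN]; norm_num, (dotp_zero_right x).symm⟩

lemma Cset_zero_mem (hN : IsNorm N) (l : ℕ) (x : Fin d → ℝ) : (0:ℝ) ∈ Cset N l x :=
  ⟨0, by rw [dualCoord_zero_right hN]; norm_num, (dotp_zero_right x).symm⟩

lemma Cset_bddAbove (hN : IsNorm N) {l : ℕ} (hl : 1 ≤ l) (x : Fin d → ℝ) :
    BddAbove (Cset N l x) := by
  obtain ⟨A, hA, hlow⟩ := (isNorm_dualCoord hN hl).lower
  refine ⟨(d : ℝ) * (‖x‖ * A), ?_⟩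
  rintro r ⟨y, hy, rfl⟩
  have h1 := (abs_le.1 (abs_dotp_le x y)).2
  have h2 : ‖y‖ ≤ A := by
    have := hlow y
    nlinarith
  have h4 : ‖x‖ * ‖y‖ ≤ ‖x‖ * A := mul_le_mul_of_nonneg_left h2 (norm_nonneg x)
  have h5 : (d:ℝ) * (‖x‖ * ‖y‖) ≤ (d:ℝ) * (‖x‖ * A) :=
    mul_le_mul_of_nonneg_left h4 (Nat.cast_nonneg d)
  linarith

lemma Cset_symm (hN : IsNorm N) {l : ℕ} {x : Fin d → ℝ} {r : ℝ} (hr : r ∈ Cset N l x) :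
    -r ∈ Cset N l x := by
  obtain ⟨y, hy, rfl⟩ := hr
  exact ⟨-y, by rw [dualCoord_neg hN]; exact hy, (dotp_neg_right x y).symm⟩

lemma coordNorm_nonneg (hN : IsNorm N) {l : ℕ} (hl : 1 ≤ l) (x : Fin d → ℝ) :
    0 ≤ coordNorm N l x := by
  rw [coordNorm_eq]
  exact le_csSup (Cset_bddAbove hN hl x) (Cset_zero_mem hN l x)

lemma coordNorm_zero (hN : IsNorm N) (l : ℕ) : coordNorm N l (0 : Fin d → ℝ) = 0 := by
  rw [coordNorm_eq]
  have : Cset N l (0 : Fin d → ℝ) = {0} := by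
    ext r
    constructor
    · rintro ⟨y, _, rfl⟩; simp [dotp_zero_left]
    · rintro rfl; exact Cset_zero_mem hN l 0
  rw [this, csSup_singleton]

lemma Cset_smul (l : ℕ) (c : ℝ) (x : Fin d → ℝ) :
    Cset N l (c • x) = (fun r => c * r) '' Cset N l x := by
  ext r
  constructor
  · rintro ⟨y, hy, rfl⟩
    exact ⟨dotp x y, ⟨y, hy, rfl⟩, (dotp_smul_left c x y).symm⟩
  · rintro ⟨s, ⟨y, hy, rfl⟩, rfl⟩
    exact ⟨y, hy, (dotp_smul_left c x y).symm⟩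

lemma coordNorm_smul (hN : IsNorm N) {l : ℕ} (hl : 1 ≤ l) (c : ℝ) (x : Fin d → ℝ) :
    coordNorm N l (c • x) = |c| * coordNorm N l x := by
  rw [coordNorm_eq, coordNorm_eq, Cset_smul]
  exact sSup_mul_symm (Cset_nonempty hN l x) (Cset_bddAbove hN hl x)
    (fun r hr => Cset_symm hN hr) c

lemma coordNorm_neg (hN : IsNorm N) {l : ℕ} (hl : 1 ≤ l) (x : Fin d → ℝ) :
    coordNorm N l (-x) = coordNorm N l x := by
  have : -x = (-1 : ℝ) • x := by funext i; simp
  rw [this, coordNorm_smul hN hl]; simp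

lemma dotp_self_pos {x : Fin d → ℝ} (hx : x ≠ 0) : 0 < dotp x x := by
  obtain ⟨i, hi⟩ : ∃ i, x i ≠ 0 := by
    by_contra h; push_neg at h; exact hx (funext h)
  unfold dotp
  apply Finset.sum_pos'
  · intro j _; exact mul_self_nonneg _
  · exact ⟨i, Finset.mem_univ i, mul_self_pos.2 hi⟩

lemma coordNorm_pos (hN : IsNorm N) {l : ℕ} (hl : 1 ≤ l) {x : Fin d → ℝ} (hx : x ≠ 0) :
    0 < coordNorm N l x := by
  set t : ℝ := (dualCoord N l x + 1)⁻¹ with ht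
  have hD := dualCoord_nonneg hN l x
  have htpos : 0 < t := by rw [ht]; positivity
  have hle : dualCoord N l (t • x) ≤ 1 := by
    rw [dualCoord_smul hN, abs_of_pos htpos, ht]
    rw [inv_mul_le_iff₀ (by positivity)]
    linarith
  have hmem : t * dotp x x ∈ Cset N l x := ⟨t • x, hle, (dotp_smul_right t x x).symm⟩
  have : t * dotp x x ≤ coordNorm N l x := le_csSup (Cset_bddAbove hN hl x) hmem
  nlinarith [dotp_self_pos hx]

lemma isLUB_ball (hN : IsNorm N) {l : ℕ} (hl : 1 ≤ l) (y : Fin d → ℝ) :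
    IsLUB {r | ∃ x, coordNorm N l x ≤ 1 ∧ r = dotp x y} (dualCoord N l y) := by
  constructor
  · rintro r ⟨x, hx, rfl⟩
    rcases eq_or_ne y 0 with rfl | hy
    · rw [dotp_zero_right, dualCoord_zero_right hN]
    · have hD := dualCoord_pos hN hl hy
      have hmem : (dualCoord N l y)⁻¹ * dotp x y ∈ Cset N l x := by
        refine ⟨(dualCoord N l y)⁻¹ • y, ?_, (dotp_smul_right _ x y).symm⟩
        rw [dualCoord_smul hN, abs_of_pos (inv_pos.2 hD), inv_mul_cancel₀ hD.ne']
      have h1 : (dualCoord N l y)⁻¹ * dotp x y ≤ 1 :=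
        (le_csSup (Cset_bddAbove hN hl x) hmem).trans hx
      calc dotp x y = dualCoord N l y * ((dualCoord N l y)⁻¹ * dotp x y) := by
            rw [← mul_assoc, mul_inv_cancel₀ hD.ne', one_mul]
        _ ≤ dualCoord N l y * 1 := mul_le_mul_of_nonneg_left h1 hD.le
        _ = dualCoord N l y := mul_one _
  · intro b hb
    have hb0 : 0 ≤ b := hb ⟨0, by rw [coordNorm_zero hN]; norm_num, (dotp_zero_left y).symm⟩
    rcases eq_or_ne y 0 with rfl | hy
    · rw [dualCoord_zero_right hN]; exact hb0
    · obtain ⟨x0, hx0, hx0y⟩ := (isNorm_dualCoord hN hl).hahnBanach hy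
      have hcn : coordNorm N l x0 ≤ 1 := by
        rw [coordNorm_eq]
        apply Real.sSup_le
        · rintro r ⟨y', hy', rfl⟩
          rw [dotp_comm]
          exact (hx0 y').trans hy'
        · norm_num
      have : dualCoord N l y = dotp x0 y := by rw [dotp_comm]; exact hx0y.symm
      rw [this]
      exact hb ⟨x0, hcn, rfl⟩

lemma exists_coordNorm_one (hN : IsNorm N) {l : ℕ} (hl : 1 ≤ l) (hld : l ≤ d) :
    ∃ x : Fin d → ℝ, coordNorm N l x = 1 := by
  have hd : 0 < d := lt_of_lt_of_le hl hld
  set z : Fin d → ℝ := Pi.single ⟨0, hd⟩ 1 with hz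
  have hzne : z ≠ 0 := by
    intro h
    have := congrFun h ⟨0, hd⟩
    simp [hz] at this
  have hc := coordNorm_pos hN hl hzne
  refine ⟨(coordNorm N l z)⁻¹ • z, ?_⟩
  rw [coordNorm_smul hN hl, abs_of_pos (inv_pos.2 hc), inv_mul_cancel₀ hc.ne']

lemma isLUB_sphere (hN : IsNorm N) {l : ℕ} (hl : 1 ≤ l) (hld : l ≤ d) (y : Fin d → ℝ) :
    IsLUB {r | ∃ x, coordNorm N l x = 1 ∧ r = dotp x y} (dualCoord N l y) := by
  obtain ⟨xs, hxs⟩ := exists_coordNorm_one hN hl hld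
  constructor
  · rintro r ⟨x, hx, rfl⟩
    exact (isLUB_ball hN hl y).1 ⟨x, hx.le, rfl⟩
  · intro b hb
    have hb0 : 0 ≤ b := by
      have h1 := hb ⟨xs, hxs, rfl⟩
      have h2 := hb ⟨-xs, by rw [coordNorm_neg hN hl]; exact hxs, (dotp_neg_left xs y).symm⟩
      linarith
    apply (isLUB_ball hN hl y).2
    rintro r ⟨x, hx, rfl⟩
    rcases le_or_gt (dotp x y) 0 with h | h
    · linarith
    · have hxne : x ≠ 0 := by
        intro hh; rw [hh, dotp_zero_left] at h; exact lt_irrefl 0 h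
      have hc := coordNorm_pos hN hl hxne
      have hinv : 1 ≤ (coordNorm N l x)⁻¹ := by
        rw [le_inv_comm₀ one_pos hc]
        simpa using hx
      have hmem : (coordNorm N l x)⁻¹ * dotp x y
          ∈ {r | ∃ x, coordNorm N l x = 1 ∧ r = dotp x y} := by
        refine ⟨(coordNorm N l x)⁻¹ • x, ?_, (dotp_smul_left _ x y).symm⟩
        rw [coordNorm_smul hN hl, abs_of_pos (inv_pos.2 hc), inv_mul_cancel₀ hc.ne']
      have := hb hmem
      nlinarith

end CoordNorm
section Exact

variable {d : ℕ} {N : (Fin d → ℝ) → ℝ}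

lemma capra_ne (hN : IsNorm N) {x : Fin d → ℝ} (hx : x ≠ 0) (y : Fin d → ℝ) :
    capra N x y = dotp x y / N x := by
  unfold capra; rw [if_neg hx]

lemma capra_neg (hN : IsNorm N) {x : Fin d → ℝ} (hx : x ≠ 0) (y : Fin d → ℝ) :
    capra N (-x) y = - capra N x y := by
  have hnx : -x ≠ 0 := fun h => hx (by simpa using congrArg Neg.neg h)
  rw [capra_ne hN hx, capra_ne hN hnx, dotp_neg_left, hN.neg, neg_div]

lemma exists_ell0_eq {l : ℕ} (hld : l ≤ d) : ∃ x : Fin d → ℝ, ell0 x = l := by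
  obtain ⟨F, _, hF⟩ := Finset.exists_subset_card_eq (s := (Finset.univ : Finset (Fin d))) (n := l)
    (by simpa [Finset.card_univ] using hld)
  classical
  refine ⟨fun i => if i ∈ F then 1 else 0, ?_⟩
  unfold ell0
  have hsupp : Function.support (fun i : Fin d => if i ∈ F then (1:ℝ) else 0) = ↑F := by
    ext i
    rw [Function.mem_support, Finset.mem_coe]
    by_cases hi : i ∈ F <;> simp [hi]
  rw [hsupp, Set.ncard_coe_finset, hF]

lemma isLUB_exact (hN : IsNorm N) {l : ℕ} (hl : 1 ≤ l) (hld : l ≤ d) (y : Fin d → ℝ) :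
    IsLUB {r | ∃ x, ell0 x = l ∧ r = capra N x y} (dualCoord N l y) := by
  have hne0 : ∀ x : Fin d → ℝ, ell0 x = l → x ≠ 0 := by
    intro x hx h
    rw [h, ell0_zero] at hx
    omega
  constructor
  · rintro r ⟨x, hxl, rfl⟩
    have hx0 : x ≠ 0 := hne0 x hxl
    have hNx : 0 < N x := hN.pos hx0
    rw [capra_ne hN hx0, dualCoord_eq_sSup_Dset hN]
    have hmem : dotp x y / N x ∈ Dset N l y := by
      refine ⟨(N x)⁻¹ • x, ?_, ?_, ?_⟩
      · rw [ell0_smul (inv_ne_zero hNx.ne')]; exact hxl.le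
      · rw [hN.smul, abs_of_pos (inv_pos.2 hNx), inv_mul_cancel₀ hNx.ne']
      · rw [dotp_smul_left, div_eq_inv_mul]
    exact le_csSup (Dset_bddAbove' hN l y) hmem
  · intro b hb
    obtain ⟨x1, hx1⟩ := exists_ell0_eq hld
    have hx1ne : x1 ≠ 0 := hne0 x1 hx1
    have hb0 : 0 ≤ b := by
      have h1 := hb ⟨x1, hx1, rfl⟩
      have h2 := hb ⟨-x1, by rw [ell0_neg]; exact hx1, (capra_neg hN hx1ne y).symm⟩
      linarith
    rw [dualCoord_eq_sSup_Dset hN]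
    apply Real.sSup_le _ hb0
    rintro r ⟨x, hxl, hxN, rfl⟩
    rcases le_or_gt (dotp x y) 0 with h | hr
    · linarith
    · -- dotp x y > 0, x ≠ 0
      have hx0 : x ≠ 0 := by
        intro hh; rw [hh, dotp_zero_left] at hr; exact lt_irrefl 0 hr
      set r := dotp x y with hrdef
      set n₀ := N x with hn₀
      have hn₀pos : 0 < n₀ := hN.pos hx0
      apply le_of_forall_pos_le_add
      intro ε hε
      rcases le_or_gt r ε with hre | hre
      · linarith
      -- now ε < r
      set B₁ : ℝ := (∑ j, |y j|) + 1 with hB₁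
      set B₂ : ℝ := (∑ j, N (Pi.single j 1 : Fin d → ℝ)) + 1 with hB₂
      have hB₁pos : 0 < B₁ := by
        rw [hB₁]
        have : 0 ≤ ∑ j, |y j| := Finset.sum_nonneg fun j _ => abs_nonneg _
        linarith
      have hB₂pos : 0 < B₂ := by
        rw [hB₂]
        have : 0 ≤ ∑ j, N (Pi.single j 1 : Fin d → ℝ) :=
          Finset.sum_nonneg fun j _ => hN.nonneg _
        linarith
      set t : ℝ := ε / (B₁ + r * B₂) with ht
      have hden : 0 < B₁ + r * B₂ := by positivity
      have htpos : 0 < t := by rw [ht]; positivity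
      have hteq : t * (B₁ + r * B₂) = ε := by
        rw [ht, div_mul_cancel₀ _ hden.ne']
      have htB₁ : t * B₁ ≤ ε := by
        have h1 : B₁ ≤ B₁ + r * B₂ := le_add_of_nonneg_right (mul_nonneg hr.le hB₂pos.le)
        have h2 : t * B₁ ≤ t * (B₁ + r * B₂) := mul_le_mul_of_nonneg_left h1 htpos.le
        linarith
      -- support and perturbation set
      classical
      set Sfin : Finset (Fin d) := (Set.toFinite (Function.support x)).toFinset with hSfin
      have hScard : Sfin.card = ell0 x := by
        rw [hSfin, ← ell0_eq_card]
      have hcompl : l - ell0 x ≤ (Finset.univ \ Sfin).card := by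
        rw [Finset.card_sdiff_of_subset (Finset.subset_univ _), Finset.card_univ, Fintype.card_fin,
          hScard]
        omega
      obtain ⟨J, hJsub, hJcard⟩ := Finset.exists_subset_card_eq hcompl
      have hJx : ∀ i ∈ J, x i = 0 := by
        intro i hi
        have := hJsub hi
        rw [Finset.mem_sdiff, hSfin, Set.Finite.mem_toFinset] at this
        have h2 := this.2
        by_contra hne
        exact h2 (Function.mem_support.2 hne)
      set w : Fin d → ℝ := fun i => if i ∈ J then t else 0 with hw
      set xt : Fin d → ℝ := x + w with hxt
      have hsupp : Function.support xt = Function.support x ∪ ↑J := by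
        ext i
        rw [Function.mem_support]
        by_cases hi : i ∈ J
        · have hxi := hJx i hi
          simp [hxt, hw, hi, hxi, htpos.ne']
        · simp [hxt, hw, hi, Function.mem_support]
      have hdisj : Disjoint (Function.support x) (↑J : Set (Fin d)) := by
        rw [Set.disjoint_left]
        intro i hi hiJ
        exact (Function.mem_support.1 hi) (hJx i hiJ)
      have hell : ell0 xt = l := by
        unfold ell0
        rw [hsupp, Set.ncard_union_eq hdisj (Set.toFinite _) (Set.toFinite _),
          Set.ncard_coe_finset, hJcard]
        have : (Function.support x).ncard = ell0 x := rfl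
        rw [this]
        omega
      have hxtne : xt ≠ 0 := by
        intro hh
        rw [hh, ell0_zero] at hell
        omega
      have hNxt : 0 < N xt := hN.pos hxtne
      -- w as a sum of singles
      have hwsum : w = ∑ j ∈ J, t • (Pi.single j 1 : Fin d → ℝ) := by
        funext i
        rw [Finset.sum_apply]
        by_cases hi : i ∈ J
        · rw [hw]
          simp only [hi, if_true]
          rw [Finset.sum_eq_single i]
          · simp
          · intro j hj hji
            simp [Pi.single_apply, Ne.symm hji]
          · intro hcon; exact absurd hi hcon
        · rw [hw]
          simp only [hi, if_false]
          symm
          apply Finset.sum_eq_zero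
          intro j hj
          have : j ≠ i := fun h => hi (h ▸ hj)
          simp [Pi.single_apply, this]
      have hNw : N w ≤ t * (B₂ - 1) := by
        rw [hwsum]
        calc N (∑ j ∈ J, t • (Pi.single j 1 : Fin d → ℝ))
            ≤ ∑ j ∈ J, N (t • (Pi.single j 1 : Fin d → ℝ)) := hN.sum_le _ _
          _ = ∑ j ∈ J, t * N (Pi.single j 1 : Fin d → ℝ) := by
              refine Finset.sum_congr rfl fun j _ => ?_
              rw [hN.smul, abs_of_pos htpos]
          _ ≤ ∑ j : Fin d, t * N (Pi.single j 1 : Fin d → ℝ) := by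
              apply Finset.sum_le_sum_of_subset_of_nonneg (Finset.subset_univ _)
              intro j _ _
              exact mul_nonneg htpos.le (hN.nonneg _)
          _ = t * (B₂ - 1) := by rw [← Finset.mul_sum, hB₂]; ring_nf
      have hdotw : |dotp w y| ≤ t * (B₁ - 1) := by
        unfold dotp
        calc |∑ i, w i * y i| ≤ ∑ i, |w i * y i| := Finset.abs_sum_le_sum_abs _ _
          _ ≤ ∑ i, t * |y i| := by
              refine Finset.sum_le_sum fun i _ => ?_
              rw [abs_mul]
              apply mul_le_mul_of_nonneg_right _ (abs_nonneg _)
              rw [hw]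
              by_cases hi : i ∈ J
              · simp [hi, abs_of_pos htpos]
              · simp [hi, htpos.le]
          _ = t * (B₁ - 1) := by rw [← Finset.mul_sum, hB₁]; ring_nf
      have hNub : N xt ≤ n₀ + t * B₂ := by
        have := hN.triangle x w
        rw [← hxt] at this
        have h2 : t * (B₂ - 1) ≤ t * B₂ := by nlinarith
        linarith
      have hdlb : r - t * B₁ ≤ dotp xt y := by
        have : dotp xt y = r + dotp w y := by rw [hxt, dotp_add_left, hrdef]
        have h2 := (abs_le.1 hdotw).1
        have h3 : t * (B₁ - 1) ≤ t * B₁ := by nlinarith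
        linarith
      have hnum : 0 < r - t * B₁ := by linarith
      have hcapxt : capra N xt y = dotp xt y / N xt := capra_ne hN hxtne y
      have hbxt : capra N xt y ≤ b := hb ⟨xt, hell, rfl⟩
      have hdenpos : 0 < n₀ + t * B₂ := add_pos hn₀pos (mul_pos htpos hB₂pos)
      clear_value t B₁ B₂ n₀ r xt w Sfin
      clear hb hne0 hsupp hdisj hwsum hJx hJsub hJcard hScard hcompl hx1 hx1ne
      clear hell hxtne hNw hdotw hw hxt hSfin ht hB₁ hB₂ hrdef hn₀
      have step1 : (r - t * B₁) / (n₀ + t * B₂) ≤ dotp xt y / N xt :=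
        div_le_div₀ (by linarith) hdlb hNxt hNub
      have step2 : r - ε ≤ (r - t * B₁) / (n₀ + t * B₂) := by
        rw [le_div_iff₀ hdenpos]
        have h0 : (r - ε) * (n₀ + t * B₂) = (r - ε) * n₀ + (r - ε) * (t * B₂) := by ring
        have h1 : (r - ε) * n₀ ≤ r - ε := by nlinarith
        have h2 : (r - ε) * (t * B₂) ≤ r * (t * B₂) :=
          mul_le_mul_of_nonneg_right (by linarith) (mul_nonneg htpos.le hB₂pos.le)
        have h3 : t * B₁ + r * (t * B₂) = ε := by linear_combination hteq
        linarith
      have : r - ε ≤ b := by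
        rw [hcapxt] at hbxt
        linarith
      linarith

end Exact
section ERealCore

lemma ereal_add_le_add_right {a b : EReal} (h : a ≤ b) (c : EReal) : a + c ≤ b + c :=
  add_le_add h le_rfl

lemma ereal_add_le_add_left {a b : EReal} (h : a ≤ b) (c : EReal) : c + a ≤ c + b :=
  add_le_add le_rfl h

lemma ereal_neg_le_neg {a b : EReal} (h : a ≤ b) : -b ≤ -a := by
  exact EReal.neg_le_neg_iff.2 h

lemma ereal_le_of_isLUB {S : Set ℝ} {c : ℝ} (h : IsLUB S c) (q E : EReal)
    (hmem : ∀ r ∈ S, (r : EReal) + q ≤ E) : (c : EReal) + q ≤ E := by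
  have hSne : S.Nonempty := by
    by_contra hS
    rw [Set.not_nonempty_iff_eq_empty] at hS
    have hub : (c - 1) ∈ upperBounds S := by
      rw [hS]; intro r hr; exact absurd hr (Set.notMem_empty r)
    have := h.2 hub
    linarith
  induction q using EReal.rec with
  | bot => rw [EReal.add_bot]; exact bot_le
  | coe q =>
      induction E using EReal.rec with
      | bot =>
          exfalso
          obtain ⟨r, hr⟩ := hSne
          have := hmem r hr
          rw [← EReal.coe_add] at this
          exact (EReal.coe_ne_bot _) (le_bot_iff.1 this)
      | coe e =>
          have hre : ∀ r ∈ S, r + q ≤ e := by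
            intro r hr
            have := hmem r hr
            rw [← EReal.coe_add] at this
            exact_mod_cast this
          have hcb : c ≤ e - q := h.2 fun r hr => by linarith [hre r hr]
          rw [← EReal.coe_add]
          exact_mod_cast (by linarith : c + q ≤ e)
      | top => exact le_top
  | top =>
      obtain ⟨r, hr⟩ := hSne
      have := hmem r hr
      rw [EReal.coe_add_top] at this
      rw [EReal.coe_add_top]
      exact this

end ERealCore

section Claims

variable {d : ℕ} {N : (Fin d → ℝ) → ℝ}

/-- The common value: `sup_{0 ≤ l ≤ d} ( ⦀y⦀_{l,★} ∔ (−φ(l)) )`. -/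
def Csup (N : (Fin d → ℝ) → ℝ) (φ : ℕ → EReal) (y : Fin d → ℝ) : EReal :=
  ⨆ l : Fin (d + 1), ((dualCoord N l.1 y : ℝ) : EReal) + (-φ l.1)

lemma capraConj_eq (hN : IsNorm N) (φ : ℕ → EReal) (y : Fin d → ℝ) :
    capraConj N (fun z => φ (ell0 z)) y = Csup N φ y := by
  apply le_antisymm
  · apply iSup_le
    intro x
    rcases eq_or_ne x 0 with rfl | hx
    · have h1 : capra N 0 y = 0 := if_pos rfl
      have h2 : dualCoord N 0 y = 0 := dualCoord_level_zero hN y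
      have : ((capra N 0 y : ℝ) : EReal) + (-φ (ell0 (0 : Fin d → ℝ)))
          = ((dualCoord N 0 y : ℝ) : EReal) + (-φ 0) := by
        rw [h1, h2, ell0_zero]
      rw [this]
      exact le_iSup (fun l : Fin (d+1) => ((dualCoord N l.1 y : ℝ) : EReal) + (-φ l.1))
        ⟨0, Nat.succ_pos d⟩
    · set k := ell0 x with hk
      have hk1 : 1 ≤ k := by
        rcases Nat.eq_zero_or_pos k with h | h
        · exact absurd ((ell0_eq_zero_iff x).1 (by omega)) hx
        · exact h
      have hkd : k ≤ d := ell0_le x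
      have hcap : capra N x y ≤ dualCoord N k y :=
        (isLUB_exact hN hk1 hkd y).1 ⟨x, rfl, rfl⟩
      calc ((capra N x y : ℝ) : EReal) + (-φ (ell0 x))
          ≤ ((dualCoord N k y : ℝ) : EReal) + (-φ k) := by
            rw [← hk]
            exact ereal_add_le_add_right (EReal.coe_le_coe_iff.2 hcap) _
        _ ≤ Csup N φ y :=
            le_iSup (fun l : Fin (d+1) => ((dualCoord N l.1 y : ℝ) : EReal) + (-φ l.1))
              ⟨k, Nat.lt_succ_of_le hkd⟩
  · apply iSup_le
    intro l
    set k := l.1 with hkdef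
    have hkd : k ≤ d := Nat.lt_succ_iff.1 l.2
    rcases Nat.eq_zero_or_pos k with hk0 | hk1
    · rw [hk0]
      have h1 : capra N (0 : Fin d → ℝ) y = 0 := if_pos rfl
      have h2 : dualCoord N 0 y = 0 := dualCoord_level_zero hN y
      have : ((dualCoord N 0 y : ℝ) : EReal) + (-φ 0)
          = ((capra N (0:Fin d → ℝ) y : ℝ) : EReal) + (-φ (ell0 (0 : Fin d → ℝ))) := by
        rw [h1, h2, ell0_zero]
      rw [this]
      exact le_iSup (fun x => ((capra N x y : ℝ) : EReal) + (-φ (ell0 x))) 0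
    · apply ereal_le_of_isLUB (isLUB_exact hN hk1 hkd y)
      rintro r ⟨x, hxk, rfl⟩
      have : ((capra N x y : ℝ) : EReal) + (-φ k)
          = ((capra N x y : ℝ) : EReal) + (-φ (ell0 x)) := by rw [hxk]
      rw [this]
      exact le_iSup (fun x => ((capra N x y : ℝ) : EReal) + (-φ (ell0 x))) x

lemma fenchel_inf_eq (hN : IsNorm N) (φ : ℕ → EReal) (A : ℕ → Set (Fin d → ℝ))
    (hA0 : A 0 = {0}) (y : Fin d → ℝ)
    (hA : ∀ k, 1 ≤ k → k ≤ d → IsLUB {r | ∃ x ∈ A k, r = dotp x y} (dualCoord N k y)) :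
    fenchelConj (fun x => sInf {v : EReal | ∃ l : ℕ, l ≤ d ∧ x ∈ A l ∧ v = φ l}) y
      = Csup N φ y := by
  have hlub : ∀ k ≤ d, IsLUB {r | ∃ x ∈ A k, r = dotp x y} (dualCoord N k y) := by
    intro k hkd
    rcases Nat.eq_zero_or_pos k with hk0 | hk1
    · subst hk0
      have hset : {r | ∃ x ∈ A 0, r = dotp x y} = {0} := by
        rw [hA0]
        ext r
        constructor
        · rintro ⟨x, hx, rfl⟩
          rw [Set.mem_singleton_iff.1 hx, dotp_zero_left]; rfl
        · rintro rfl
          exact ⟨0, rfl, (dotp_zero_left y).symm⟩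
      rw [hset, dualCoord_level_zero hN]
      exact isLUB_singleton
    · exact hA k hk1 hkd
  apply le_antisymm
  · apply iSup_le
    intro x
    beta_reduce
    set L := {v : EReal | ∃ l : ℕ, l ≤ d ∧ x ∈ A l ∧ v = φ l} with hL
    rcases L.eq_empty_or_nonempty with hLe | hLne
    · rw [hLe, sInf_empty]
      show ((dotp x y : ℝ) : EReal) + (-(⊤ : EReal)) ≤ _
      rw [EReal.neg_top, EReal.add_bot]
      exact bot_le
    · have hLfin : L.Finite := by
        apply Set.Finite.subset ((Set.finite_Iic d).image φ)
        rintro v ⟨l, hld, _, rfl⟩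
        exact ⟨l, by simpa using hld, rfl⟩
      obtain ⟨l, hld, hxA, hveq⟩ := hLne.csInf_mem hLfin
      have hdx : dotp x y ≤ dualCoord N l y := (hlub l hld).1 ⟨x, hxA, rfl⟩
      calc ((dotp x y : ℝ) : EReal) + (-sInf L)
          ≤ ((dualCoord N l y : ℝ) : EReal) + (-φ l) := by
            rw [hveq]
            exact ereal_add_le_add_right (EReal.coe_le_coe_iff.2 hdx) _
        _ ≤ Csup N φ y :=
            le_iSup (fun l : Fin (d+1) => ((dualCoord N l.1 y : ℝ) : EReal) + (-φ l.1))
              ⟨l, Nat.lt_succ_of_le hld⟩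
  · apply iSup_le
    intro l
    have hkd : l.1 ≤ d := Nat.lt_succ_iff.1 l.2
    apply ereal_le_of_isLUB (hlub l.1 hkd)
    rintro r ⟨x, hxA, rfl⟩
    have hgle : sInf {v : EReal | ∃ l : ℕ, l ≤ d ∧ x ∈ A l ∧ v = φ l} ≤ φ l.1 :=
      sInf_le ⟨l.1, hkd, hxA, rfl⟩
    calc ((dotp x y : ℝ) : EReal) + (-φ l.1)
        ≤ ((dotp x y : ℝ) : EReal)
          + (-sInf {v : EReal | ∃ l : ℕ, l ≤ d ∧ x ∈ A l ∧ v = φ l}) :=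
          ereal_add_le_add_left (ereal_neg_le_neg hgle) _
      _ ≤ _ := le_iSup (fun x => ((dotp x y : ℝ) : EReal)
          + (-sInf {v : EReal | ∃ l : ℕ, l ≤ d ∧ x ∈ A l ∧ v = φ l})) x

lemma coordBall_zero : coordBall N 0 = ({0} : Set (Fin d → ℝ)) := by
  unfold coordBall; simp

lemma coordSphere_zero : coordSphere N 0 = ({0} : Set (Fin d → ℝ)) := by
  unfold coordSphere; simp

lemma mem_coordBall {k : ℕ} (hk : k ≠ 0) (x : Fin d → ℝ) :
    x ∈ coordBall N k ↔ coordNorm N k x ≤ 1 := by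
  unfold coordBall; rw [if_neg hk]; rfl

lemma mem_coordSphere {k : ℕ} (hk : k ≠ 0) (x : Fin d → ℝ) :
    x ∈ coordSphere N k ↔ coordNorm N k x = 1 := by
  unfold coordSphere; rw [if_neg hk]; rfl

lemma fenchel_ball_eq (hN : IsNorm N) (φ : ℕ → EReal) (y : Fin d → ℝ) :
    fenchelConj (fun x =>
        sInf {v : EReal | ∃ l : ℕ, l ≤ d ∧ x ∈ coordBall N l ∧ v = φ l}) y
      = Csup N φ y := by
  apply fenchel_inf_eq hN φ (coordBall N) coordBall_zero y
  intro k hk1 hkd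
  have hset : {r | ∃ x ∈ coordBall N k, r = dotp x y}
      = {r | ∃ x, coordNorm N k x ≤ 1 ∧ r = dotp x y} := by
    ext r
    constructor
    · rintro ⟨x, hx, rfl⟩
      exact ⟨x, (mem_coordBall (by omega) x).1 hx, rfl⟩
    · rintro ⟨x, hx, rfl⟩
      exact ⟨x, (mem_coordBall (by omega) x).2 hx, rfl⟩
  rw [hset]
  exact isLUB_ball hN hk1 y

lemma fenchel_sphere_eq (hN : IsNorm N) (φ : ℕ → EReal) (y : Fin d → ℝ) :
    fenchelConj (fun x =>
        sInf {v : EReal | ∃ l : ℕ, l ≤ d ∧ x ∈ coordSphere N l ∧ v = φ l}) y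
      = Csup N φ y := by
  apply fenchel_inf_eq hN φ (coordSphere N) coordSphere_zero y
  intro k hk1 hkd
  have hset : {r | ∃ x ∈ coordSphere N k, r = dotp x y}
      = {r | ∃ x, coordNorm N k x = 1 ∧ r = dotp x y} := by
    ext r
    constructor
    · rintro ⟨x, hx, rfl⟩
      exact ⟨x, (mem_coordSphere (by omega) x).1 hx, rfl⟩
    · rintro ⟨x, hx, rfl⟩
      exact ⟨x, (mem_coordSphere (by omega) x).2 hx, rfl⟩
  rw [hset]
  exact isLUB_sphere hN hk1 hkd y

end Claims

theorem statement11 {d : ℕ} (N : (Fin d → ℝ) → ℝ) (hN : IsNorm N) (φ : ℕ → EReal) :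
    (∀ x : Fin d → ℝ, x ≠ 0 →
        capraBiconj N (fun z => φ (ell0 z)) x
          = fenchelConj (capraConj N (fun z => φ (ell0 z))) ((N x)⁻¹ • x)) ∧
      (fenchelConj (capraConj N (fun z => φ (ell0 z)))
        = fenchelBiconj (fun x =>
            sInf {v : EReal | ∃ l : ℕ, l ≤ d ∧ x ∈ coordBall N l ∧ v = φ l})) ∧
      (fenchelConj (capraConj N (fun z => φ (ell0 z)))
        = fenchelBiconj (fun x =>
            sInf {v : EReal | ∃ l : ℕ, l ≤ d ∧ x ∈ coordSphere N l ∧ v = φ l})) := by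
  have hNx : ∀ y : Fin d → ℝ, capraConj N (fun z => φ (ell0 z)) y = Csup N φ y :=
    capraConj_eq hN φ
  refine ⟨?_, ?_, ?_⟩
  · intro x hx
    unfold capraBiconj fenchelConj
    apply iSup_congr
    intro y
    congr 2
    rw [capra_ne hN hx, dotp_smul_right, dotp_comm y x, div_eq_inv_mul]
  · have hcc : capraConj N (fun z => φ (ell0 z))
        = fenchelConj (fun x =>
            sInf {v : EReal | ∃ l : ℕ, l ≤ d ∧ x ∈ coordBall N l ∧ v = φ l}) :=
      funext fun y => (hNx y).trans (fenchel_ball_eq hN φ y).symm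
    rw [hcc]
    funext x
    unfold fenchelBiconj fenchelConj
    apply iSup_congr
    intro y
    rw [dotp_comm]
  · have hcc : capraConj N (fun z => φ (ell0 z))
        = fenchelConj (fun x =>
            sInf {v : EReal | ∃ l : ℕ, l ≤ d ∧ x ∈ coordSphere N l ∧ v = φ l}) :=
      funext fun y => (hNx y).trans (fenchel_sphere_eq hN φ y).symm
    rw [hcc]
    funext x
    unfold fenchelBiconj fenchelConj
    apply iSup_congr
    intro y
    rw [dotp_comm]
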